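/- Let A be an additive category, X^{•,•} a bounded double complex, and r ∈ ℤ. Let σ^{≤r-1}X denote the double complex with columns X^{i,•} for i ≤ r−1 and zero otherwise (horizontal differentials kept where both columns survive), and σ^{≥r}X similarly for i ≥ r. Let φ : Tot(σ^{≤r-1}X)[1] → Tot(σ^{≥r}X) be the morphism induced by the horizontal differential d_H : X^{r-1,j} → X^{r,j}. Then φ is a morphism of complexes and Tot(X) is isomorphic, as a cochain complex, to the mapping cone Cone(φ). -/

import Mathlib

open CategoryTheory CategoryTheory.Limits

/-- An index of the degree-`n` part of the total complex: a pair `(i,j)` with `i + j = n`. -/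
def TotIdx (n : ℤ) : Type := {p : ℤ × ℤ // p.1 + p.2 = n}

/-- Constructor for total-complex indices. -/
def mkTotIdx (n i j : ℤ) (hij : i + j = n) : TotIdx n := ⟨(i, j), hij⟩

/-- Indices of the degree-`n` part of the total complex of the stupid truncation
`σ^{≤ r−1} X` (columns `i ≤ r−1`). -/
def LeIdx (r n : ℤ) : Type := {p : ℤ × ℤ // p.1 + p.2 = n ∧ p.1 ≤ r - 1}

/-- Constructor for `LeIdx`. -/
def mkLeIdx (r n i j : ℤ) (hij : i + j = n) (hi : i ≤ r - 1) : LeIdx r n := ⟨(i, j), hij, hi⟩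

/-- Indices of the degree-`n` part of the total complex of the stupid truncation
`σ^{≥ r} X` (columns `i ≥ r`). -/
def GeIdx (r n : ℤ) : Type := {p : ℤ × ℤ // p.1 + p.2 = n ∧ r ≤ p.1}

/-- Constructor for `GeIdx`. -/
def mkGeIdx (r n i j : ℤ) (hij : i + j = n) (hi : r ≤ i) : GeIdx r n := ⟨(i, j), hij, hi⟩


section Aux

open CategoryTheory CategoryTheory.Limits

variable {A : Type*} [Category A] [Preadditive A] [HasBinaryBiproducts A]
    (X : ℤ → ℤ → A) (r : ℤ)
    [htot : ∀ n : ℤ, HasBiproduct (fun p : TotIdx n => X p.1.1 p.1.2)]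
    [hle : ∀ n : ℤ, HasBiproduct (fun p : LeIdx r n => X p.1.1 p.1.2)]
    [hge : ∀ n : ℤ, HasBiproduct (fun p : GeIdx r n => X p.1.1 p.1.2)]

/-- The degreewise comparison map `Tot(X)^n ⟶ Tot(σ^{≥r}X)^n ⊞ Tot(σ^{≤r-1}X)^n`. -/
noncomputable def ψhom (n : ℤ) : (⨁ fun p : TotIdx n => X p.1.1 p.1.2) ⟶
    ((⨁ fun p : GeIdx r n => X p.1.1 p.1.2) ⊞ (⨁ fun p : LeIdx r n => X p.1.1 p.1.2)) :=
  biproduct.desc fun p =>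
    if h : r ≤ p.1.1 then
      biproduct.ι (fun q : GeIdx r n => X q.1.1 q.1.2) ⟨p.1, p.2, h⟩ ≫ biprod.inl
    else
      biproduct.ι (fun q : LeIdx r n => X q.1.1 q.1.2) ⟨p.1, p.2, by omega⟩ ≫ biprod.inr

/-- The degreewise inverse comparison map. -/
noncomputable def ψinv (n : ℤ) :
    ((⨁ fun p : GeIdx r n => X p.1.1 p.1.2) ⊞ (⨁ fun p : LeIdx r n => X p.1.1 p.1.2)) ⟶
    (⨁ fun p : TotIdx n => X p.1.1 p.1.2) :=
  biprod.desc
    (biproduct.desc fun q => biproduct.ι (fun p : TotIdx n => X p.1.1 p.1.2) ⟨q.1, q.2.1⟩)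
    (biproduct.desc fun q => biproduct.ι (fun p : TotIdx n => X p.1.1 p.1.2) ⟨q.1, q.2.1⟩)

/-- The degreewise comparison isomorphism. -/
noncomputable def ψiso (n : ℤ) : (⨁ fun p : TotIdx n => X p.1.1 p.1.2) ≅
    ((⨁ fun p : GeIdx r n => X p.1.1 p.1.2) ⊞ (⨁ fun p : LeIdx r n => X p.1.1 p.1.2)) where
  hom := ψhom X r n
  inv := ψinv X r n
  hom_inv_id := by
    apply biproduct.hom_ext'
    rintro ⟨⟨i, j⟩, hij⟩
    by_cases h : r ≤ i
    · rw [Category.comp_id]; unfold ψhom ψinv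
      rw [← Category.assoc]; erw [biproduct.ι_desc]
      rw [dif_pos h, Category.assoc, biprod.inl_desc]; erw [biproduct.ι_desc]
    · rw [Category.comp_id]; unfold ψhom ψinv
      rw [← Category.assoc]; erw [biproduct.ι_desc]
      rw [dif_neg h, Category.assoc, biprod.inr_desc]; erw [biproduct.ι_desc]
  inv_hom_id := by
    apply biprod.hom_ext' <;> apply biproduct.hom_ext'
    · rintro ⟨⟨i, j⟩, hij, hi⟩
      rw [Category.comp_id]; unfold ψinv; rw [biprod.inl_desc_assoc]; unfold ψhom
      erw [biproduct.ι_desc_assoc, biproduct.ι_desc]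
      rw [dif_pos hi]
    · rintro ⟨⟨i, j⟩, hij, hi⟩
      have h : ¬ r ≤ i := by omega
      rw [Category.comp_id]; unfold ψinv; rw [biprod.inr_desc_assoc]; unfold ψhom
      erw [biproduct.ι_desc_assoc, biproduct.ι_desc]
      rw [dif_neg h]

end Aux

/-- For a bounded double complex `X` and the morphism
`φ : Tot(σ^{≤r−1}X)[1] ⟶ Tot(σ^{≥r}X)` induced by the horizontal differential `d_H`,
`φ` is a morphism of complexes and the total complex `Tot(X)` is isomorphic, as a cochain
complex, to the mapping cone `Cone(φ)` (whose degree-`n` part is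
`Tot(σ^{≥r}X)^n ⊕ Tot(σ^{≤r−1}X)[1]^{n+1}`). -/
theorem stmt18 {A : Type*} [Category A] [Preadditive A] [HasBinaryBiproducts A]
    (X : ℤ → ℤ → A)
    (dH : ∀ i j : ℤ, X i j ⟶ X (i + 1) j)
    (dV : ∀ i j : ℤ, X i j ⟶ X i (j + 1))
    (hHH : ∀ i j : ℤ, dH i j ≫ dH (i + 1) j = 0)
    (hVV : ∀ i j : ℤ, dV i j ≫ dV i (j + 1) = 0)
    (hHV : ∀ i j : ℤ, dH i j ≫ dV (i + 1) j = dV i j ≫ dH i (j + 1))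
    -- boundedness
    (hbdd : ∃ N : ℤ, ∀ i j : ℤ, N < |i| + |j| → IsZero (X i j))
    (r : ℤ)
    [htot : ∀ n : ℤ, HasBiproduct (fun p : TotIdx n => X p.1.1 p.1.2)]
    [hle : ∀ n : ℤ, HasBiproduct (fun p : LeIdx r n => X p.1.1 p.1.2)]
    [hge : ∀ n : ℤ, HasBiproduct (fun p : GeIdx r n => X p.1.1 p.1.2)]
    -- the total differential of `X`
    (dT : ∀ n : ℤ, (⨁ fun p : TotIdx n => X p.1.1 p.1.2) ⟶
        (⨁ fun p : TotIdx (n + 1) => X p.1.1 p.1.2))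
    (hdT : ∀ (n i j : ℤ) (hij : i + j = n),
      biproduct.ι (fun p : TotIdx n => X p.1.1 p.1.2) (mkTotIdx n i j hij) ≫ dT n
        = dH i j ≫ biproduct.ι (fun p : TotIdx (n + 1) => X p.1.1 p.1.2)
            (mkTotIdx (n + 1) (i + 1) j (by omega))
          + (Int.negOnePow i : ℤ) •
            (dV i j ≫ biproduct.ι (fun p : TotIdx (n + 1) => X p.1.1 p.1.2)
              (mkTotIdx (n + 1) i (j + 1) (by omega))))
    -- the total differential of the truncation `σ^{≤ r−1} X`
    (dle : ∀ n : ℤ, (⨁ fun p : LeIdx r n => X p.1.1 p.1.2) ⟶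
        (⨁ fun p : LeIdx r (n + 1) => X p.1.1 p.1.2))
    (hdle₁ : ∀ (n i j : ℤ) (hij : i + j = n) (hi : i + 1 ≤ r - 1),
      biproduct.ι (fun p : LeIdx r n => X p.1.1 p.1.2) (mkLeIdx r n i j hij (by omega)) ≫ dle n
        = dH i j ≫ biproduct.ι (fun p : LeIdx r (n + 1) => X p.1.1 p.1.2)
            (mkLeIdx r (n + 1) (i + 1) j (by omega) hi)
          + (Int.negOnePow i : ℤ) •
            (dV i j ≫ biproduct.ι (fun p : LeIdx r (n + 1) => X p.1.1 p.1.2)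
              (mkLeIdx r (n + 1) i (j + 1) (by omega) (by omega))))
    (hdle₂ : ∀ (n j : ℤ) (hij : (r - 1) + j = n),
      biproduct.ι (fun p : LeIdx r n => X p.1.1 p.1.2)
          (mkLeIdx r n (r - 1) j hij (by omega)) ≫ dle n
        = (Int.negOnePow (r - 1) : ℤ) •
            (dV (r - 1) j ≫ biproduct.ι (fun p : LeIdx r (n + 1) => X p.1.1 p.1.2)
              (mkLeIdx r (n + 1) (r - 1) (j + 1) (by omega) (by omega))))
    -- the total differential of the truncation `σ^{≥ r} X`
    (dge : ∀ n : ℤ, (⨁ fun p : GeIdx r n => X p.1.1 p.1.2) ⟶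
        (⨁ fun p : GeIdx r (n + 1) => X p.1.1 p.1.2))
    (hdge : ∀ (n i j : ℤ) (hij : i + j = n) (hi : r ≤ i),
      biproduct.ι (fun p : GeIdx r n => X p.1.1 p.1.2) (mkGeIdx r n i j hij hi) ≫ dge n
        = dH i j ≫ biproduct.ι (fun p : GeIdx r (n + 1) => X p.1.1 p.1.2)
            (mkGeIdx r (n + 1) (i + 1) j (by omega) (by omega))
          + (Int.negOnePow i : ℤ) •
            (dV i j ≫ biproduct.ι (fun p : GeIdx r (n + 1) => X p.1.1 p.1.2)
              (mkGeIdx r (n + 1) i (j + 1) (by omega) hi)))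
    -- the morphism `φ : Tot(σ^{≤r−1}X)[1] ⟶ Tot(σ^{≥r}X)` induced by `d_H`
    (φ : ∀ n : ℤ, (⨁ fun p : LeIdx r n => X p.1.1 p.1.2) ⟶
        (⨁ fun p : GeIdx r (n + 1) => X p.1.1 p.1.2))
    (hφ₁ : ∀ (n j : ℤ) (hij : (r - 1) + j = n),
      biproduct.ι (fun p : LeIdx r n => X p.1.1 p.1.2)
          (mkLeIdx r n (r - 1) j hij (by omega)) ≫ φ n
        = dH (r - 1) j ≫
            (biproduct.ι (fun p : GeIdx r (n + 1) => X p.1.1 p.1.2)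
              (mkGeIdx r (n + 1) (r - 1 + 1) j (by omega) (by omega))))
    (hφ₂ : ∀ (n i j : ℤ) (hij : i + j = n) (hi : i + 1 ≤ r - 1),
      biproduct.ι (fun p : LeIdx r n => X p.1.1 p.1.2)
          (mkLeIdx r n i j hij (by omega)) ≫ φ n = 0) :
    -- `φ` is a morphism of complexes (from the shifted complex, whose differential is `−dle`)
    (∀ n : ℤ, φ n ≫ dge (n + 1) = -(dle n ≫ φ (n + 1))) ∧
    -- `Tot(X)` is isomorphic, as a cochain complex, to `Cone(φ)`
    ∃ ψ : ∀ n : ℤ, (⨁ fun p : TotIdx n => X p.1.1 p.1.2) ≅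
        ((⨁ fun p : GeIdx r n => X p.1.1 p.1.2) ⊞ (⨁ fun p : LeIdx r n => X p.1.1 p.1.2)),
      ∀ n : ℤ,
        (ψ n).hom ≫
          biprod.desc (dge n ≫ biprod.inl) (φ n ≫ biprod.inl + dle n ≫ biprod.inr)
          = dT n ≫ (ψ (n + 1)).hom := by
  have hHHr : ∀ (i j : ℤ) {Z : A} (h : X (i + 1 + 1) j ⟶ Z),
      dH i j ≫ dH (i + 1) j ≫ h = 0 := by
    intro i j Z h; rw [← Category.assoc, hHH, zero_comp]
  have hHVr : ∀ (i j : ℤ) {Z : A} (h : X (i + 1) (j + 1) ⟶ Z),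
      dH i j ≫ dV (i + 1) j ≫ h = dV i j ≫ dH i (j + 1) ≫ h := by
    intro i j Z h; rw [← Category.assoc, hHV, Category.assoc]
  -- reassoc'd reformulations of the hypotheses with anonymous-constructor indices
  have hdT' : ∀ (n i j : ℤ) (hij : i + j = n) (h1 : (i + 1) + j = n + 1)
      (h2 : i + (j + 1) = n + 1) {Z : A} (h : (⨁ fun p : TotIdx (n + 1) => X p.1.1 p.1.2) ⟶ Z),
      biproduct.ι (fun p : TotIdx n => X p.1.1 p.1.2) ⟨(i, j), hij⟩ ≫ dT n ≫ h
        = dH i j ≫ biproduct.ι (fun p : TotIdx (n + 1) => X p.1.1 p.1.2) ⟨(i + 1, j), h1⟩ ≫ h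
          + (Int.negOnePow i : ℤ) •
            (dV i j ≫ biproduct.ι (fun p : TotIdx (n + 1) => X p.1.1 p.1.2)
              ⟨(i, j + 1), h2⟩ ≫ h) := by
    have hdT'p : ∀ (n i j : ℤ) (hij : i + j = n) (h1 : (i + 1) + j = n + 1)
        (h2 : i + (j + 1) = n + 1),
        biproduct.ι (fun p : TotIdx n => X p.1.1 p.1.2) ⟨(i, j), hij⟩ ≫ dT n
          = dH i j ≫ biproduct.ι (fun p : TotIdx (n + 1) => X p.1.1 p.1.2) ⟨(i + 1, j), h1⟩
            + (Int.negOnePow i : ℤ) •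
              (dV i j ≫ biproduct.ι (fun p : TotIdx (n + 1) => X p.1.1 p.1.2)
                ⟨(i, j + 1), h2⟩) :=
      fun n i j hij _ _ => hdT n i j hij
    intro n i j hij h1 h2 Z h
    rw [← Category.assoc, hdT'p n i j hij h1 h2, Preadditive.add_comp, Preadditive.zsmul_comp]
    simp only [Category.assoc]
  have hdge' : ∀ (n i j : ℤ) (hij : i + j = n) (hi : r ≤ i) (h1 : (i + 1) + j = n + 1)
      (hi1 : r ≤ i + 1) (h2 : i + (j + 1) = n + 1),
      biproduct.ι (fun p : GeIdx r n => X p.1.1 p.1.2) ⟨(i, j), hij, hi⟩ ≫ dge n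
        = dH i j ≫ biproduct.ι (fun p : GeIdx r (n + 1) => X p.1.1 p.1.2) ⟨(i + 1, j), h1, hi1⟩
          + (Int.negOnePow i : ℤ) •
            (dV i j ≫ biproduct.ι (fun p : GeIdx r (n + 1) => X p.1.1 p.1.2)
              ⟨(i, j + 1), h2, hi⟩) :=
    fun n i j hij hi _ _ _ => hdge n i j hij hi
  have hdge'r : ∀ (n i j : ℤ) (hij : i + j = n) (hi : r ≤ i) (h1 : (i + 1) + j = n + 1)
      (hi1 : r ≤ i + 1) (h2 : i + (j + 1) = n + 1) {Z : A}
      (h : (⨁ fun p : GeIdx r (n + 1) => X p.1.1 p.1.2) ⟶ Z),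
      biproduct.ι (fun p : GeIdx r n => X p.1.1 p.1.2) ⟨(i, j), hij, hi⟩ ≫ dge n ≫ h
        = dH i j ≫ biproduct.ι (fun p : GeIdx r (n + 1) => X p.1.1 p.1.2)
            ⟨(i + 1, j), h1, hi1⟩ ≫ h
          + (Int.negOnePow i : ℤ) •
            (dV i j ≫ biproduct.ι (fun p : GeIdx r (n + 1) => X p.1.1 p.1.2)
              ⟨(i, j + 1), h2, hi⟩ ≫ h) := by
    intro n i j hij hi h1 hi1 h2 Z h
    rw [← Category.assoc, hdge' n i j hij hi h1 hi1 h2, Preadditive.add_comp,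
      Preadditive.zsmul_comp]
    simp only [Category.assoc]
  have hdle₁' : ∀ (n i j : ℤ) (hij : i + j = n) (hi0 : i ≤ r - 1) (hi : i + 1 ≤ r - 1)
      (h1 : (i + 1) + j = n + 1) (h2 : i + (j + 1) = n + 1),
      biproduct.ι (fun p : LeIdx r n => X p.1.1 p.1.2) ⟨(i, j), hij, hi0⟩ ≫ dle n
        = dH i j ≫ biproduct.ι (fun p : LeIdx r (n + 1) => X p.1.1 p.1.2) ⟨(i + 1, j), h1, hi⟩
          + (Int.negOnePow i : ℤ) •
            (dV i j ≫ biproduct.ι (fun p : LeIdx r (n + 1) => X p.1.1 p.1.2)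
              ⟨(i, j + 1), h2, hi0⟩) :=
    fun n i j hij _ hi _ _ => hdle₁ n i j hij hi
  have hdle₁'r : ∀ (n i j : ℤ) (hij : i + j = n) (hi0 : i ≤ r - 1) (hi : i + 1 ≤ r - 1)
      (h1 : (i + 1) + j = n + 1) (h2 : i + (j + 1) = n + 1) {Z : A}
      (h : (⨁ fun p : LeIdx r (n + 1) => X p.1.1 p.1.2) ⟶ Z),
      biproduct.ι (fun p : LeIdx r n => X p.1.1 p.1.2) ⟨(i, j), hij, hi0⟩ ≫ dle n ≫ h
        = dH i j ≫ biproduct.ι (fun p : LeIdx r (n + 1) => X p.1.1 p.1.2)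
            ⟨(i + 1, j), h1, hi⟩ ≫ h
          + (Int.negOnePow i : ℤ) •
            (dV i j ≫ biproduct.ι (fun p : LeIdx r (n + 1) => X p.1.1 p.1.2)
              ⟨(i, j + 1), h2, hi0⟩ ≫ h) := by
    intro n i j hij hi0 hi h1 h2 Z h
    rw [← Category.assoc, hdle₁' n i j hij hi0 hi h1 h2, Preadditive.add_comp,
      Preadditive.zsmul_comp]
    simp only [Category.assoc]
  have hdle₂' : ∀ (n i j : ℤ) (hij : i + j = n) (hi0 : i ≤ r - 1) (hi : i = r - 1)
      (h2 : i + (j + 1) = n + 1),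
      biproduct.ι (fun p : LeIdx r n => X p.1.1 p.1.2) ⟨(i, j), hij, hi0⟩ ≫ dle n
        = (Int.negOnePow i : ℤ) •
            (dV i j ≫ biproduct.ι (fun p : LeIdx r (n + 1) => X p.1.1 p.1.2)
              ⟨(i, j + 1), h2, hi0⟩) := by
    intro n i j hij hi0 hi h2
    subst hi
    exact hdle₂ n j hij
  have hdle₂'r : ∀ (n i j : ℤ) (hij : i + j = n) (hi0 : i ≤ r - 1) (hi : i = r - 1)
      (h2 : i + (j + 1) = n + 1) {Z : A}
      (h : (⨁ fun p : LeIdx r (n + 1) => X p.1.1 p.1.2) ⟶ Z),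
      biproduct.ι (fun p : LeIdx r n => X p.1.1 p.1.2) ⟨(i, j), hij, hi0⟩ ≫ dle n ≫ h
        = (Int.negOnePow i : ℤ) •
            (dV i j ≫ biproduct.ι (fun p : LeIdx r (n + 1) => X p.1.1 p.1.2)
              ⟨(i, j + 1), h2, hi0⟩ ≫ h) := by
    intro n i j hij hi0 hi h2 Z h
    rw [← Category.assoc, hdle₂' n i j hij hi0 hi h2, Preadditive.zsmul_comp, Category.assoc]
  have hφ₁' : ∀ (n i j : ℤ) (hij : i + j = n) (hi0 : i ≤ r - 1) (hi : i = r - 1)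
      (h1 : (i + 1) + j = n + 1) (hi1 : r ≤ i + 1),
      biproduct.ι (fun p : LeIdx r n => X p.1.1 p.1.2) ⟨(i, j), hij, hi0⟩ ≫ φ n
        = dH i j ≫ biproduct.ι (fun p : GeIdx r (n + 1) => X p.1.1 p.1.2)
            ⟨(i + 1, j), h1, hi1⟩ := by
    intro n i j hij hi0 hi h1 hi1
    subst hi
    exact hφ₁ n j hij
  have hφ₁'r : ∀ (n i j : ℤ) (hij : i + j = n) (hi0 : i ≤ r - 1) (hi : i = r - 1)
      (h1 : (i + 1) + j = n + 1) (hi1 : r ≤ i + 1) {Z : A}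
      (h : (⨁ fun p : GeIdx r (n + 1) => X p.1.1 p.1.2) ⟶ Z),
      biproduct.ι (fun p : LeIdx r n => X p.1.1 p.1.2) ⟨(i, j), hij, hi0⟩ ≫ φ n ≫ h
        = dH i j ≫ biproduct.ι (fun p : GeIdx r (n + 1) => X p.1.1 p.1.2)
            ⟨(i + 1, j), h1, hi1⟩ ≫ h := by
    intro n i j hij hi0 hi h1 hi1 Z h
    rw [← Category.assoc, hφ₁' n i j hij hi0 hi h1 hi1, Category.assoc]
  have hφ₂' : ∀ (n i j : ℤ) (hij : i + j = n) (hi0 : i ≤ r - 1) (hi : i + 1 ≤ r - 1),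
      biproduct.ι (fun p : LeIdx r n => X p.1.1 p.1.2) ⟨(i, j), hij, hi0⟩ ≫ φ n = 0 :=
    fun n i j hij _ hi => hφ₂ n i j hij hi
  have hφ₂'r : ∀ (n i j : ℤ) (hij : i + j = n) (hi0 : i ≤ r - 1) (hi : i + 1 ≤ r - 1) {Z : A}
      (h : (⨁ fun p : GeIdx r (n + 1) => X p.1.1 p.1.2) ⟶ Z),
      biproduct.ι (fun p : LeIdx r n => X p.1.1 p.1.2) ⟨(i, j), hij, hi0⟩ ≫ φ n ≫ h = 0 := by
    intro n i j hij hi0 hi Z h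
    rw [← Category.assoc, hφ₂' n i j hij hi0 hi, zero_comp]
  constructor
  · intro n
    apply biproduct.hom_ext'
    rintro ⟨⟨i, j⟩, hij, hi⟩
    by_cases hc : i = r - 1
    · rw [hφ₁'r n i j hij hi hc (by omega) (by omega),
        hdge' (n + 1) (i + 1) j (by omega) (by omega) (by omega) (by omega) (by omega),
        Preadditive.comp_add, Preadditive.comp_zsmul, hHHr, hHVr, zero_add,
        Preadditive.comp_neg, hdle₂'r n i j hij hi hc (by omega),
        hφ₁' (n + 1) i (j + 1) (by omega) hi hc (by omega) (by omega),
        Int.negOnePow_succ]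
      simp
    · rw [hφ₂'r n i j hij hi (by omega),
        Preadditive.comp_neg, hdle₁'r n i j hij hi (by omega) (by omega) (by omega)]
      by_cases hc2 : i + 1 = r - 1
      · rw [hφ₁' (n + 1) (i + 1) j (by omega) (by omega) hc2 (by omega) (by omega),
          hHHr, hφ₂' (n + 1) i (j + 1) (by omega) hi (by omega)]
        simp
      · rw [hφ₂' (n + 1) (i + 1) j (by omega) (by omega) (by omega),
          hφ₂' (n + 1) i (j + 1) (by omega) hi (by omega)]
        simp
  · have hhomGe : ∀ (m i j : ℤ) (hij : i + j = m) (h : r ≤ i),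
        biproduct.ι (fun p : TotIdx m => X p.1.1 p.1.2) ⟨(i, j), hij⟩ ≫ (ψiso X r m).hom
          = biproduct.ι (fun q : GeIdx r m => X q.1.1 q.1.2) ⟨(i, j), hij, h⟩ ≫ biprod.inl := by
      intro m i j hij h
      exact (biproduct.ι_desc _ _).trans (dif_pos h)
    have hhomLe : ∀ (m i j : ℤ) (hij : i + j = m) (h : i ≤ r - 1),
        biproduct.ι (fun p : TotIdx m => X p.1.1 p.1.2) ⟨(i, j), hij⟩ ≫ (ψiso X r m).hom
          = biproduct.ι (fun q : LeIdx r m => X q.1.1 q.1.2) ⟨(i, j), hij, h⟩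
              ≫ biprod.inr := by
      intro m i j hij h
      have h' : ¬ r ≤ i := by omega
      exact (biproduct.ι_desc _ _).trans (dif_neg h')
    have hhomGer : ∀ (m i j : ℤ) (hij : i + j = m) (h : r ≤ i) {Z : A}
        (g : ((⨁ fun p : GeIdx r m => X p.1.1 p.1.2) ⊞
          (⨁ fun p : LeIdx r m => X p.1.1 p.1.2)) ⟶ Z),
        biproduct.ι (fun p : TotIdx m => X p.1.1 p.1.2) ⟨(i, j), hij⟩ ≫ (ψiso X r m).hom ≫ g
          = biproduct.ι (fun q : GeIdx r m => X q.1.1 q.1.2) ⟨(i, j), hij, h⟩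
              ≫ biprod.inl ≫ g := by
      intro m i j hij h Z g
      rw [← Category.assoc, hhomGe m i j hij h, Category.assoc]
    have hhomLer : ∀ (m i j : ℤ) (hij : i + j = m) (h : i ≤ r - 1) {Z : A}
        (g : ((⨁ fun p : GeIdx r m => X p.1.1 p.1.2) ⊞
          (⨁ fun p : LeIdx r m => X p.1.1 p.1.2)) ⟶ Z),
        biproduct.ι (fun p : TotIdx m => X p.1.1 p.1.2) ⟨(i, j), hij⟩ ≫ (ψiso X r m).hom ≫ g
          = biproduct.ι (fun q : LeIdx r m => X q.1.1 q.1.2) ⟨(i, j), hij, h⟩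
              ≫ biprod.inr ≫ g := by
      intro m i j hij h Z g
      rw [← Category.assoc, hhomLe m i j hij h, Category.assoc]
    refine ⟨fun n => ψiso X r n, fun n => ?_⟩
    apply biproduct.hom_ext'
    rintro ⟨⟨i, j⟩, hij⟩
    rw [hdT' n i j hij (by omega) (by omega)]
    by_cases h : r ≤ i
    · rw [hhomGer n i j hij h, biprod.inl_desc,
        hdge'r n i j hij h (by omega) (by omega) (by omega),
        hhomGe (n + 1) (i + 1) j (by omega) (by omega),
        hhomGe (n + 1) i (j + 1) (by omega) h]
    · have h' : i ≤ r - 1 := by omega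
      rw [hhomLer n i j hij h', biprod.inr_desc, Preadditive.comp_add,
        hhomLe (n + 1) i (j + 1) (by omega) h']
      by_cases hc : i = r - 1
      · rw [hφ₁'r n i j hij h' hc (by omega) (by omega),
          hdle₂'r n i j hij h' hc (by omega),
          hhomGe (n + 1) (i + 1) j (by omega) (by omega)]
      · rw [hφ₂'r n i j hij h' (by omega), zero_add,
          hdle₁'r n i j hij h' (by omega) (by omega) (by omega),
          hhomLe (n + 1) (i + 1) j (by omega) (by omega)]
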